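/- Let E, F, M, N be Banach spaces and n ≥ 1. If E and F contain complemented subspaces isomorphic to M and N respectively, then the quotient P(ⁿE;F)/P_K(ⁿE;F) contains a complemented subspace isomorphic to P(ⁿM;N)/P_K(ⁿM;N). -/

import Mathlib

open scoped ENNReal

noncomputable section

/-- A normed space `E` has the approximation property if for every compact set `K` and `ε > 0`
there is a finite rank bounded operator `T : E → E` with `‖T x - x‖ < ε` on `K`. -/
def HasAP (𝕜 E : Type*) [NontriviallyNormedField 𝕜] [SeminormedAddCommGroup E]
    [NormedSpace 𝕜 E] : Prop :=
  ∀ K : Set E, IsCompact K → ∀ ε : ℝ, 0 < ε →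
    ∃ T : E →L[𝕜] E, FiniteDimensional 𝕜 (LinearMap.range (T : E →ₗ[𝕜] E)) ∧
      ∀ x ∈ K, ‖T x - x‖ < ε

/-- The closed subspace of symmetric continuous `n`-linear maps, our model for the Banach space
`P(ⁿE;F)` of continuous `n`-homogeneous polynomials from `E` to `F` (a polynomial is identified
with its unique symmetric generating multilinear map). -/
def SymmCM (𝕜 : Type*) [NontriviallyNormedField 𝕜] (n : ℕ) (E F : Type*)
    [NormedAddCommGroup E] [NormedSpace 𝕜 E] [NormedAddCommGroup F] [NormedSpace 𝕜 F] :
    Submodule 𝕜 (ContinuousMultilinearMap 𝕜 (fun _ : Fin n => E) F) where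
  carrier := {A | ∀ (σ : Equiv.Perm (Fin n)) (v : Fin n → E), A (v ∘ σ) = A v}
  add_mem' := by intro a b ha hb σ v; simp [ha σ v, hb σ v]
  zero_mem' := by intro σ v; simp
  smul_mem' := by intro c a ha σ v; simp [ha σ v]

/-- The Banach space of continuous `n`-homogeneous polynomials from `E` to `F`. -/
abbrev HomPoly (𝕜 : Type*) [NontriviallyNormedField 𝕜] (n : ℕ) (E F : Type*)
    [NormedAddCommGroup E] [NormedSpace 𝕜 E] [NormedAddCommGroup F] [NormedSpace 𝕜 F] :=
  ↥(SymmCM 𝕜 n E F)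

/-- Evaluation of a homogeneous polynomial on the diagonal. -/
def HomPoly.eval {𝕜 : Type*} [NontriviallyNormedField 𝕜] {n : ℕ} {E F : Type*}
    [NormedAddCommGroup E] [NormedSpace 𝕜 E] [NormedAddCommGroup F] [NormedSpace 𝕜 F]
    (P : HomPoly 𝕜 n E F) (x : E) : F :=
  (P : ContinuousMultilinearMap 𝕜 (fun _ : Fin n => E) F) (fun _ => x)

open scoped Pointwise

/-- A homogeneous polynomial is compact if it maps bounded sets to relatively compact sets. -/
def IsCompactPoly {𝕜 : Type*} [NontriviallyNormedField 𝕜] {n : ℕ} {E F : Type*}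
    [NormedAddCommGroup E] [NormedSpace 𝕜 E] [NormedAddCommGroup F] [NormedSpace 𝕜 F]
    (P : HomPoly 𝕜 n E F) : Prop :=
  ∀ S : Set E, Bornology.IsBounded S → IsCompact (closure (P.eval '' S))

def compactPolys (𝕜 : Type*) [NontriviallyNormedField 𝕜] (n : ℕ) (E F : Type*)
    [NormedAddCommGroup E] [NormedSpace 𝕜 E] [NormedAddCommGroup F] [NormedSpace 𝕜 F] :
    Submodule 𝕜 (HomPoly 𝕜 n E F) where
  carrier := {P | IsCompactPoly P}
  add_mem' := by
    intro P Q hP hQ S hS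
    have h1 := hP S hS
    have h2 := hQ S hS
    refine (h1.add h2).of_isClosed_subset isClosed_closure
      (closure_minimal ?_ (h1.add h2).isClosed)
    rintro y ⟨x, hx, rfl⟩
    have : (P + Q).eval x = P.eval x + Q.eval x := by
      simp [HomPoly.eval]
    rw [this]
    exact Set.add_mem_add (subset_closure (Set.mem_image_of_mem _ hx))
      (subset_closure (Set.mem_image_of_mem _ hx))
  zero_mem' := by
    intro S _
    refine (isCompact_singleton (x := (0:F))).of_isClosed_subset isClosed_closure
      (closure_minimal ?_ isClosed_singleton)
    rintro y ⟨x, -, rfl⟩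
    simp [HomPoly.eval]
  smul_mem' := by
    intro c P hP S hS
    have h1 := hP S hS
    have h2 : IsCompact (c • closure (P.eval '' S)) := h1.smul c
    refine h2.of_isClosed_subset isClosed_closure (closure_minimal ?_ h2.isClosed)
    rintro y ⟨x, hx, rfl⟩
    have : (c • P).eval x = c • P.eval x := by simp [HomPoly.eval]
    rw [this]
    exact Set.smul_mem_smul_set (subset_closure (Set.mem_image_of_mem _ hx))


section AuxDefs
variable {𝕜 E F M N : Type*} [RCLike 𝕜]
    [NormedAddCommGroup E] [NormedSpace 𝕜 E]
    [NormedAddCommGroup F] [NormedSpace 𝕜 F]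
    [NormedAddCommGroup M] [NormedSpace 𝕜 M]
    [NormedAddCommGroup N] [NormedSpace 𝕜 N] {n : ℕ}

def cmMap (A : N →L[𝕜] F) (B : E →L[𝕜] M) (P : ContinuousMultilinearMap 𝕜 (fun _ : Fin n => M) N) :
    ContinuousMultilinearMap 𝕜 (fun _ : Fin n => E) F :=
  A.compContinuousMultilinearMap (P.compContinuousLinearMap (fun _ => B))

theorem cmMap_apply (A : N →L[𝕜] F) (B : E →L[𝕜] M)
    (P : ContinuousMultilinearMap 𝕜 (fun _ : Fin n => M) N) (v : Fin n → E) :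
    cmMap A B P v = A (P (fun i => B (v i))) := rfl

theorem cmMap_mem (A : N →L[𝕜] F) (B : E →L[𝕜] M) (P : HomPoly 𝕜 n M N) :
    cmMap A B (P : ContinuousMultilinearMap 𝕜 (fun _ : Fin n => M) N) ∈ SymmCM 𝕜 n E F := by
  intro σ v
  have hP := P.2
  simp only [cmMap_apply]
  have : (fun i => B ((v ∘ σ) i)) = (fun i => B (v i)) ∘ σ := rfl
  rw [this, hP σ]

def polyMap (A : N →L[𝕜] F) (B : E →L[𝕜] M) :
    HomPoly 𝕜 n M N →L[𝕜] HomPoly 𝕜 n E F :=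
  LinearMap.mkContinuous
    { toFun := fun P => ⟨cmMap A B (P : ContinuousMultilinearMap 𝕜 (fun _ : Fin n => M) N),
        cmMap_mem A B P⟩
      map_add' := by
        intro P Q
        ext v
        simp [cmMap_apply]
      map_smul' := by
        intro c P
        ext v
        simp [cmMap_apply] }
    (‖A‖ * ∏ _i : Fin n, ‖B‖)
    (by
      intro P
      show ‖cmMap A B (P : ContinuousMultilinearMap 𝕜 (fun _ : Fin n => M) N)‖ ≤ _
      calc ‖cmMap A B (P : ContinuousMultilinearMap 𝕜 (fun _ : Fin n => M) N)‖
          ≤ ‖A‖ * ‖(P : ContinuousMultilinearMap 𝕜 (fun _ : Fin n => M) N).compContinuousLinearMap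
              (fun _ => B)‖ :=
            ContinuousLinearMap.norm_compContinuousMultilinearMap_le _ _
        _ ≤ ‖A‖ * (‖(P : ContinuousMultilinearMap 𝕜 (fun _ : Fin n => M) N)‖ * ∏ _i : Fin n, ‖B‖) :=
            mul_le_mul_of_nonneg_left
              (ContinuousMultilinearMap.norm_compContinuousLinearMap_le _ _) (norm_nonneg A)
        _ = (‖A‖ * ∏ _i : Fin n, ‖B‖) * ‖P‖ := by rw [Submodule.coe_norm]; ring)

theorem polyMap_apply (A : N →L[𝕜] F) (B : E →L[𝕜] M) (P : HomPoly 𝕜 n M N) (v : Fin n → E) :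
    ((polyMap A B P : HomPoly 𝕜 n E F) :
      ContinuousMultilinearMap 𝕜 (fun _ : Fin n => E) F) v
      = A ((P : ContinuousMultilinearMap 𝕜 (fun _ : Fin n => M) N) (fun i => B (v i))) := rfl

theorem polyMap_eval (A : N →L[𝕜] F) (B : E →L[𝕜] M) (P : HomPoly 𝕜 n M N) (x : E) :
    (polyMap A B P).eval x = A (P.eval (B x)) := rfl

theorem isCompactPoly_polyMap (A : N →L[𝕜] F) (B : E →L[𝕜] M) {P : HomPoly 𝕜 n M N}
    (hP : IsCompactPoly P) : IsCompactPoly (polyMap A B P) := by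
  intro S hS
  have hBS : Bornology.IsBounded (⇑B '' S) := B.lipschitz.isBounded_image hS
  have hK : IsCompact (closure (P.eval '' (⇑B '' S))) := hP _ hBS
  have hAK : IsCompact (⇑A '' closure (P.eval '' (⇑B '' S))) := hK.image A.continuous
  refine hAK.of_isClosed_subset isClosed_closure (closure_minimal ?_ hAK.isClosed)
  rintro y ⟨x, hx, rfl⟩
  rw [polyMap_eval]
  exact ⟨P.eval (B x), subset_closure ⟨B x, ⟨x, hx, rfl⟩, rfl⟩, rfl⟩

variable {X Y : Type*} [AddCommGroup X] [Module 𝕜 X] [TopologicalSpace X] [IsTopologicalAddGroup X]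
  [AddCommGroup Y] [Module 𝕜 Y] [TopologicalSpace Y]

def mkQL (S : Submodule 𝕜 X) : X →L[𝕜] X ⧸ S :=
  ⟨S.mkQ, continuous_quot_mk⟩

theorem mkQL_apply (S : Submodule 𝕜 X) (x : X) : mkQL S x = Submodule.Quotient.mk x := rfl

def quotLift (S : Submodule 𝕜 X) (g : X →L[𝕜] Y) (h : S ≤ LinearMap.ker (g : X →ₗ[𝕜] Y)) :
    (X ⧸ S) →L[𝕜] Y where
  toLinearMap := S.liftQ (g : X →ₗ[𝕜] Y) h
  cont := by
    show Continuous ⇑(S.liftQ (g : X →ₗ[𝕜] Y) h)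
    apply S.isOpenQuotientMap_mkQ.continuous_comp_iff.mp
    have : (S.liftQ (g : X →ₗ[𝕜] Y) h) ∘ S.mkQ = ⇑g := by
      funext x
      simp
    rw [this]
    exact g.continuous

theorem quotLift_apply (S : Submodule 𝕜 X) (g : X →L[𝕜] Y)
    (h : S ≤ LinearMap.ker (g : X →ₗ[𝕜] Y)) (x : X) :
    quotLift S g h (Submodule.Quotient.mk x) = g x := rfl

theorem compactPolys_le_ker (A : N →L[𝕜] F) (B : E →L[𝕜] M) :
    compactPolys 𝕜 n M N ≤ LinearMap.ker
      (((mkQL (compactPolys 𝕜 n E F)).comp (polyMap A B) :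
        HomPoly 𝕜 n M N →L[𝕜] HomPoly 𝕜 n E F ⧸ compactPolys 𝕜 n E F) :
        HomPoly 𝕜 n M N →ₗ[𝕜] HomPoly 𝕜 n E F ⧸ compactPolys 𝕜 n E F) := by
  intro P hP
  rw [LinearMap.mem_ker]
  show Submodule.Quotient.mk (polyMap A B P) = 0
  rw [Submodule.Quotient.mk_eq_zero]
  exact isCompactPoly_polyMap A B hP

def quotPolyMap (A : N →L[𝕜] F) (B : E →L[𝕜] M) :
    (HomPoly 𝕜 n M N ⧸ compactPolys 𝕜 n M N) →L[𝕜]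
      (HomPoly 𝕜 n E F ⧸ compactPolys 𝕜 n E F) :=
  quotLift (compactPolys 𝕜 n M N) ((mkQL (compactPolys 𝕜 n E F)).comp (polyMap A B))
    (compactPolys_le_ker A B)

theorem quotPolyMap_mk (A : N →L[𝕜] F) (B : E →L[𝕜] M) (P : HomPoly 𝕜 n M N) :
    quotPolyMap A B (Submodule.Quotient.mk P) = Submodule.Quotient.mk (polyMap A B P) :=
  quotLift_apply (compactPolys 𝕜 n M N) ((mkQL (compactPolys 𝕜 n E F)).comp (polyMap A B))
    (compactPolys_le_ker A B) P

end AuxDefs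

/-- If `E` and `F` contain complemented subspaces isomorphic to `M` and `N`, then for `n ≥ 1`
the quotient `P(ⁿE;F)/P_K(ⁿE;F)` contains a complemented subspace isomorphic to
`P(ⁿM;N)/P_K(ⁿM;N)`. -/
theorem quotient_polySpace_complemented (𝕜 E F M N : Type*) [RCLike 𝕜]
    [NormedAddCommGroup E] [NormedSpace 𝕜 E] [CompleteSpace E]
    [NormedAddCommGroup F] [NormedSpace 𝕜 F] [CompleteSpace F]
    [NormedAddCommGroup M] [NormedSpace 𝕜 M] [CompleteSpace M]
    [NormedAddCommGroup N] [NormedSpace 𝕜 N] [CompleteSpace N]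
    (n : ℕ) (hn : 1 ≤ n)
    (hM : ∃ (A₁ : M →L[𝕜] E) (B₁ : E →L[𝕜] M), B₁.comp A₁ = ContinuousLinearMap.id 𝕜 M)
    (hN : ∃ (A₂ : N →L[𝕜] F) (B₂ : F →L[𝕜] N), B₂.comp A₂ = ContinuousLinearMap.id 𝕜 N) :
    ∃ (C : (HomPoly 𝕜 n M N ⧸ compactPolys 𝕜 n M N) →L[𝕜]
            (HomPoly 𝕜 n E F ⧸ compactPolys 𝕜 n E F))
      (D : (HomPoly 𝕜 n E F ⧸ compactPolys 𝕜 n E F) →L[𝕜]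
            (HomPoly 𝕜 n M N ⧸ compactPolys 𝕜 n M N)),
      D.comp C = ContinuousLinearMap.id 𝕜 (HomPoly 𝕜 n M N ⧸ compactPolys 𝕜 n M N) := by
  obtain ⟨A₁, B₁, hBA₁⟩ := hM
  obtain ⟨A₂, B₂, hBA₂⟩ := hN
  have hB₁A₁ : ∀ x : M, B₁ (A₁ x) = x := fun x =>
    congrArg (fun f : M →L[𝕜] M => f x) hBA₁
  have hB₂A₂ : ∀ y : N, B₂ (A₂ y) = y := fun y =>
    congrArg (fun f : N →L[𝕜] N => f y) hBA₂
  refine ⟨quotPolyMap A₂ B₁, quotPolyMap B₂ A₁, ?_⟩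
  ext x
  obtain ⟨P, rfl⟩ := Submodule.Quotient.mk_surjective _ x
  have key : polyMap B₂ A₁ (polyMap A₂ B₁ P) = P := by
    apply Subtype.ext
    apply ContinuousMultilinearMap.ext
    intro v
    rw [polyMap_apply, polyMap_apply]
    have : (fun i => B₁ (A₁ (v i))) = v := funext fun i => hB₁A₁ (v i)
    rw [this, hB₂A₂]
  show quotPolyMap B₂ A₁ (quotPolyMap A₂ B₁ (Submodule.Quotient.mk P))
      = Submodule.Quotient.mk P
  rw [quotPolyMap_mk, quotPolyMap_mk, key]
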